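/- Let A ∈ ℝ^{n×n}, B ∈ ℝ^{n×m}, and let K^{i-1}, K^i ∈ ℝ^{m×n} with Φ_{i-1} = Φ(K^{i-1}), Φ_i = Φ(K^i) defined by Φ(K) = [[A,B],[-KA,-KB]], and Ψ_i = [[0,0],[(K^i-K^{i-1})A, (K^i-K^{i-1})B]]. Suppose Θ^i and Θ^{i+1} are symmetric and satisfy Θ^i = Q̄ + Φ_{i-1}ᵀ Θ^i Φ_{i-1} and Θ^{i+1} = Q̄ + Φ_iᵀ Θ^{i+1} Φ_i, where Θ^i is partitioned as [[Θ_xx^i, (Θ_ux^i)ᵀ],[Θ_ux^i, Θ_uu^i]] with Θ_uu^i invertible and K^i = (Θ_uu^i)⁻¹ Θ_ux^i. Then Θ^i - Θ^{i+1} = Φ_iᵀ (Θ^i - Θ^{i+1}) Φ_i + Ψ_iᵀ Θ^i Ψ_i. -/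
import Mathlib


open Matrix

/-- Difference identity for consecutive Q-learning iterates:
`Θⁱ - Θⁱ⁺¹ = Φᵢᵀ (Θⁱ - Θⁱ⁺¹) Φᵢ + Ψᵢᵀ Θⁱ Ψᵢ`. -/
theorem stmt8 {n m : ℕ}
    (A : Matrix (Fin n) (Fin n) ℝ) (B : Matrix (Fin n) (Fin m) ℝ)
    (Kim1 Ki : Matrix (Fin m) (Fin n) ℝ)
    (Q : Matrix (Fin n ⊕ Fin m) (Fin n ⊕ Fin m) ℝ) (hQ : Q.IsSymm)
    (Θxx : Matrix (Fin n) (Fin n) ℝ) (Θux : Matrix (Fin m) (Fin n) ℝ)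
    (Θuu : Matrix (Fin m) (Fin m) ℝ) (huu : IsUnit Θuu)
    (Θi Θi1 : Matrix (Fin n ⊕ Fin m) (Fin n ⊕ Fin m) ℝ)
    (hΘi : Θi = Matrix.fromBlocks Θxx Θuxᵀ Θux Θuu)
    (hsymi : Θi.IsSymm) (hsymi1 : Θi1.IsSymm)
    (hKi : Ki = Θuu⁻¹ * Θux)
    (hlyapi : Θi = Q + (Matrix.fromBlocks A B (-(Kim1 * A)) (-(Kim1 * B)))ᵀ * Θi *
        Matrix.fromBlocks A B (-(Kim1 * A)) (-(Kim1 * B)))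
    (hlyapi1 : Θi1 = Q + (Matrix.fromBlocks A B (-(Ki * A)) (-(Ki * B)))ᵀ * Θi1 *
        Matrix.fromBlocks A B (-(Ki * A)) (-(Ki * B))) :
    Θi - Θi1 = (Matrix.fromBlocks A B (-(Ki * A)) (-(Ki * B)))ᵀ * (Θi - Θi1) *
        Matrix.fromBlocks A B (-(Ki * A)) (-(Ki * B)) +
      (Matrix.fromBlocks 0 0 ((Ki - Kim1) * A) ((Ki - Kim1) * B))ᵀ * Θi *
        Matrix.fromBlocks 0 0 ((Ki - Kim1) * A) ((Ki - Kim1) * B) := by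

  set Φ := Matrix.fromBlocks A B (-(Ki * A)) (-(Ki * B)) with hΦ
  set Ψ := Matrix.fromBlocks 0 0 ((Ki - Kim1) * A) ((Ki - Kim1) * B) with hΨ
  have hΦim1 : Matrix.fromBlocks A B (-(Kim1 * A)) (-(Kim1 * B)) = Φ + Ψ := by
    rw [hΦ, hΨ, Matrix.fromBlocks_add, add_zero, add_zero, Matrix.sub_mul, Matrix.sub_mul]
    congr 1 <;> try congr 1 <;> try abel
  have hΘuu : Θuuᵀ = Θuu := by
    have h := hsymi
    rw [Matrix.IsSymm, hΘi, Matrix.fromBlocks_transpose] at h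
    have := congrArg Matrix.toBlocks₂₂ h
    simpa [Matrix.toBlocks_fromBlocks₂₂] using this
  have hΘux : Θux = Θuu * Ki := by
    rw [hKi, ← Matrix.mul_assoc,
      Matrix.mul_nonsing_inv _ ((Matrix.isUnit_iff_isUnit_det Θuu).mp huu), Matrix.one_mul]
  have hcross : Φᵀ * Θi * Ψ = 0 := by
    rw [hΦ, hΨ, hΘi, Matrix.fromBlocks_transpose, Matrix.mul_assoc,
      Matrix.fromBlocks_multiply, Matrix.fromBlocks_multiply]
    have huxT : Θuxᵀ = Kiᵀ * Θuu := by rw [hΘux, Matrix.transpose_mul, hΘuu]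
    ext (i|i) (j|j) <;> simp [Matrix.fromBlocks, huxT, Matrix.transpose_neg,
      Matrix.transpose_mul, Matrix.mul_assoc, Matrix.neg_mul, Matrix.mul_add,
      ← Matrix.mul_assoc]
  have hcross' : Ψᵀ * Θi * Φ = 0 := by
    have := congrArg Matrix.transpose hcross
    simpa [Matrix.transpose_mul, Matrix.mul_assoc, hsymi.eq] using this
  have key : Θi - Θi1 = Φᵀ * Θi * Φ + Ψᵀ * Θi * Ψ - Φᵀ * Θi1 * Φ := by
    conv_lhs => rw [hlyapi, hlyapi1, hΦim1]
    simp only [Matrix.transpose_add, Matrix.add_mul, Matrix.mul_add]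
    rw [hcross, hcross']
    abel
  rw [Matrix.mul_sub, Matrix.sub_mul, key]
  abel
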